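/- arXiv:2604.16661 — 4 statements merged into one kernel-verified Lean document; each statement's English description precedes it below -/
import Mathlib

section
/- Posterior of the global shrinkage scale (Lemma 2, in integral form): Fix τ > 0 and let m(y,τ) = ∫_ℝ φ(y−μ) π(μ|τ) dμ be the Horseshoe marginal likelihood. Then for every y ∈ ℝ, m(y,τ) = (√2/π^{3/2}) · τ · Ψ(y,τ), where Ψ(y,τ) = (1/2) ∫₀¹ (1−u)^{−1/2} (1−(1−τ²)u)^{−1} e^{−y²u/2} du. Consequently, for any hyperprior density π(τ) on (0,∞), the posterior density of τ given Y = (Y_1,…,Y_n) (proportional to π(τ)·∏_{i=1}^n m(Y_i,τ)) is proportional, as a function of τ, to π(τ) · τⁿ · ∏_{i=1}^n Ψ(Y_i,τ). -/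
open MeasureTheory Filter
open scoped Classical

/-- Density of `N(0,s)`. -/
noncomputable def gauss (s x : ℝ) : ℝ :=
  (Real.sqrt (2 * Real.pi * s))⁻¹ * Real.exp (-x ^ 2 / (2 * s))

/-- Univariate Horseshoe prior density with global scale `τ`. -/
noncomputable def hs (τ θ : ℝ) : ℝ :=
  ∫ l in Set.Ioi (0 : ℝ), gauss (l ^ 2 * τ ^ 2) θ * ((2 / Real.pi) * (1 + l ^ 2)⁻¹)

/-- Horseshoe marginal likelihood `m(y,τ)`. -/
noncomputable def marg (y τ : ℝ) : ℝ :=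
  ∫ μ : ℝ, gauss 1 (y - μ) * hs τ μ

/-- `Ψ(y,τ)`, the Euler integral representation of `Φ₁(1,1,3/2,−y²/2,1−τ²)`. -/
noncomputable def Psi (y τ : ℝ) : ℝ :=
  (1 / 2) * ∫ u in Set.Ioo (0 : ℝ) 1,
    (1 - u) ^ (-(1 : ℝ) / 2) * (1 - (1 - τ ^ 2) * u)⁻¹ * Real.exp (-y ^ 2 * u / 2)

open Real

lemma gauss_nonneg (s x : ℝ) : 0 ≤ gauss s x := by
  unfold gauss; positivity

lemma gauss_conv (s : ℝ) (hs : 0 < s) (y : ℝ) :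
    ∫ μ : ℝ, gauss 1 (y - μ) * gauss s μ = gauss (1 + s) y := by
  have h1s : (0:ℝ) < 1 + s := by linarith
  set a : ℝ := (1 + s) / (2 * s) with ha
  have hapos : 0 < a := by positivity
  set c : ℝ := s * y / (1 + s) with hc
  set K : ℝ := (Real.sqrt (2 * π * 1))⁻¹ * (Real.sqrt (2 * π * s))⁻¹ *
      Real.exp (-y ^ 2 / (2 * (1 + s))) with hK
  have hexp : ∀ x : ℝ, -(y - x) ^ 2 / (2 * 1) + -x ^ 2 / (2 * s)
      = -y ^ 2 / (2 * (1 + s)) + -a * (x - c) ^ 2 := by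
    intro x; rw [ha, hc]; field_simp; ring
  have key : ∀ x : ℝ, gauss 1 (y - x) * gauss s x = K * Real.exp (-a * (x - c) ^ 2) := by
    intro x
    calc gauss 1 (y - x) * gauss s x
        = (Real.sqrt (2 * π * 1))⁻¹ * (Real.sqrt (2 * π * s))⁻¹ *
            Real.exp (-(y - x) ^ 2 / (2 * 1) + -x ^ 2 / (2 * s)) := by
          unfold gauss; rw [Real.exp_add]; ring
      _ = K * Real.exp (-a * (x - c) ^ 2) := by rw [hexp x, hK, Real.exp_add]; ring
  simp_rw [key]
  rw [integral_const_mul]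
  have : ∫ x : ℝ, Real.exp (-a * (x - c) ^ 2) = ∫ x : ℝ, Real.exp (-a * x ^ 2) :=
    integral_sub_right_eq_self (fun x => Real.exp (-a * x ^ 2)) c
  rw [this, integral_gaussian]
  -- algebra with sqrt
  have hπ : (0:ℝ) < π := Real.pi_pos
  have h2πs : (0:ℝ) < 2 * π * s := by positivity
  have h1 : Real.sqrt (π / a) = Real.sqrt (2 * π * s) / Real.sqrt (1 + s) := by
    rw [show π / a = (2 * π * s) / (1 + s) by rw [ha]; field_simp,
      Real.sqrt_div h2πs.le]
  rw [h1, hK]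
  unfold gauss
  have h2p : (0:ℝ) ≤ 2 * π := by positivity
  rw [show (2:ℝ) * π * (1 + s) = 2 * π * (1 + s) from rfl]
  rw [Real.sqrt_mul h2p (1 + s), Real.sqrt_mul h2p s, Real.sqrt_mul h2p 1, Real.sqrt_one]
  have e1 : Real.sqrt (2 * π) ≠ 0 := by positivity
  have e2 : Real.sqrt s ≠ 0 := by positivity
  have e3 : Real.sqrt (1 + s) ≠ 0 := by positivity
  field_simp


lemma gauss_le_of_one_le {t : ℝ} (ht : 1 ≤ t) (y : ℝ) : gauss t y ≤ (Real.sqrt (2 * π))⁻¹ := by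
  unfold gauss
  have h1 : Real.exp (-y ^ 2 / (2 * t)) ≤ 1 := by
    rw [Real.exp_le_one_iff]
    apply div_nonpos_of_nonpos_of_nonneg <;> nlinarith
  have h2 : (Real.sqrt (2 * π * t))⁻¹ ≤ (Real.sqrt (2 * π))⁻¹ := by
    apply inv_anti₀ (by positivity)
    apply Real.sqrt_le_sqrt; nlinarith [Real.pi_pos]
  calc (Real.sqrt (2 * π * t))⁻¹ * Real.exp (-y ^ 2 / (2 * t))
      ≤ (Real.sqrt (2 * π * t))⁻¹ * 1 := by
        apply mul_le_mul_of_nonneg_left h1 (by positivity)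
    _ ≤ (Real.sqrt (2 * π))⁻¹ := by rwa [mul_one]
  

set_option maxHeartbeats 1000000 in
lemma marg_eq (τ : ℝ) (hτ : 0 < τ) (y : ℝ) :
    marg y τ = ∫ l in Set.Ioi (0:ℝ),
      (2 / π) * (1 + l ^ 2)⁻¹ * gauss (1 + l ^ 2 * τ ^ 2) y := by
  have hmeas : Measurable (fun p : ℝ × ℝ =>
      gauss 1 (y - p.1) * (gauss (p.2 ^ 2 * τ ^ 2) p.1 * ((2 / π) * (1 + p.2 ^ 2)⁻¹))) := by
    unfold gauss
    apply Measurable.mul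
    · exact measurable_const.mul
        ((((measurable_const.sub measurable_fst).pow measurable_const).neg.div
          measurable_const).exp)
    · apply Measurable.mul
      · apply Measurable.mul
        · exact ((measurable_const.mul
            ((measurable_snd.pow measurable_const).mul measurable_const)).sqrt).inv
        · exact (((measurable_fst.pow measurable_const).neg).div
            (measurable_const.mul
              ((measurable_snd.pow measurable_const).mul measurable_const))).exp
      · exact measurable_const.mul
          ((measurable_const.add (measurable_snd.pow measurable_const)).inv)
  have hint : Integrable
      (Function.uncurry fun μ l : ℝ =>
        gauss 1 (y - μ) * (gauss (l ^ 2 * τ ^ 2) μ * ((2 / π) * (1 + l ^ 2)⁻¹)))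
      (volume.prod (volume.restrict (Set.Ioi (0:ℝ)))) := by
    have huc : (Function.uncurry fun μ l : ℝ =>
        gauss 1 (y - μ) * (gauss (l ^ 2 * τ ^ 2) μ * ((2 / π) * (1 + l ^ 2)⁻¹)))
        = fun p : ℝ × ℝ =>
        gauss 1 (y - p.1) * (gauss (p.2 ^ 2 * τ ^ 2) p.1 * ((2 / π) * (1 + p.2 ^ 2)⁻¹)) := rfl
    rw [huc, integrable_prod_iff' hmeas.aestronglyMeasurable]
    constructor
    · rw [ae_restrict_iff' measurableSet_Ioi]
      filter_upwards with l hl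
      have hs0 : 0 < l ^ 2 * τ ^ 2 := by
        have : (0:ℝ) < l := hl
        positivity
      have hg : Integrable (fun μ => gauss (l ^ 2 * τ ^ 2) μ) := by
        unfold gauss
        apply Integrable.const_mul
        have h2 : ∀ μ : ℝ, Real.exp (-μ ^ 2 / (2 * (l ^ 2 * τ ^ 2)))
            = Real.exp (-(2 * (l ^ 2 * τ ^ 2))⁻¹ * μ ^ 2) := by
          intro μ; congr 1; field_simp
        simp_rw [h2]
        exact integrable_exp_neg_mul_sq (by positivity)
      have h3 : (fun μ : ℝ => gauss 1 (y - μ) * (gauss (l ^ 2 * τ ^ 2) μ * ((2 / π) * (1 + l ^ 2)⁻¹)))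
          = fun μ => (gauss 1 (y - μ) * ((2 / π) * (1 + l ^ 2)⁻¹)) * gauss (l ^ 2 * τ ^ 2) μ := by
        funext μ; ring
      show Integrable (fun μ : ℝ => gauss 1 (y - μ) * (gauss (l ^ 2 * τ ^ 2) μ * ((2 / π) * (1 + l ^ 2)⁻¹)))
      rw [h3]
      apply hg.bdd_mul (c := (Real.sqrt (2 * π))⁻¹ * ((2 / π) * (1 + l ^ 2)⁻¹))
      · apply Continuous.aestronglyMeasurable
        apply Continuous.mul _ continuous_const
        unfold gauss
        exact continuous_const.mul (((continuous_const.sub continuous_id).pow 2).neg.div_const _).rexp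
      · refine ae_of_all _ fun μ => ?_
        have hπ := Real.pi_pos
        rw [Real.norm_eq_abs, abs_of_nonneg (mul_nonneg (gauss_nonneg _ _) (by positivity))]
        apply mul_le_mul_of_nonneg_right _ (by positivity)
        simpa using gauss_le_of_one_le le_rfl (y - μ)
    · have hbound : Integrable (fun l : ℝ => (Real.sqrt (2 * π))⁻¹ * ((2 / π) * (1 + l ^ 2)⁻¹))
          (volume.restrict (Set.Ioi (0:ℝ))) :=
        ((integrable_inv_one_add_sq.const_mul _).const_mul _).restrict
      apply Integrable.mono hbound
      · exact (hmeas.norm.stronglyMeasurable.integral_prod_left').aestronglyMeasurable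
      · rw [ae_restrict_iff' measurableSet_Ioi]
        filter_upwards with l hl
        have hπ := Real.pi_pos
        have hs0 : 0 < l ^ 2 * τ ^ 2 := by
          have : (0:ℝ) < l := hl
          positivity
        have heq : (∫ μ : ℝ, ‖gauss 1 (y - μ) * (gauss (l ^ 2 * τ ^ 2) μ * ((2 / π) * (1 + l ^ 2)⁻¹))‖)
            = ((2 / π) * (1 + l ^ 2)⁻¹) * gauss (1 + l ^ 2 * τ ^ 2) y := by
          have h4 : ∀ μ : ℝ, ‖gauss 1 (y - μ) * (gauss (l ^ 2 * τ ^ 2) μ * ((2 / π) * (1 + l ^ 2)⁻¹))‖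
              = ((2 / π) * (1 + l ^ 2)⁻¹) * (gauss 1 (y - μ) * gauss (l ^ 2 * τ ^ 2) μ) := by
            intro μ
            rw [Real.norm_eq_abs, abs_of_nonneg
              (mul_nonneg (gauss_nonneg _ _) (mul_nonneg (gauss_nonneg _ _) (by positivity)))]
            ring
          simp_rw [h4]
          rw [integral_const_mul, gauss_conv _ hs0]
        show ‖∫ μ : ℝ, ‖gauss 1 (y - μ) * (gauss (l ^ 2 * τ ^ 2) μ * ((2 / π) * (1 + l ^ 2)⁻¹))‖‖
            ≤ ‖(Real.sqrt (2 * π))⁻¹ * ((2 / π) * (1 + l ^ 2)⁻¹)‖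
        rw [heq, Real.norm_eq_abs, Real.norm_eq_abs,
          abs_of_nonneg (mul_nonneg (by positivity) (gauss_nonneg _ _)),
          abs_of_nonneg (by positivity)]
        have h5 := gauss_le_of_one_le (by nlinarith : (1:ℝ) ≤ 1 + l ^ 2 * τ ^ 2) y
        calc (2 / π) * (1 + l ^ 2)⁻¹ * gauss (1 + l ^ 2 * τ ^ 2) y
            ≤ (2 / π) * (1 + l ^ 2)⁻¹ * (Real.sqrt (2 * π))⁻¹ := by
              apply mul_le_mul_of_nonneg_left h5 (by positivity)
          _ = (Real.sqrt (2 * π))⁻¹ * ((2 / π) * (1 + l ^ 2)⁻¹) := by ring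
  have step1 : marg y τ = ∫ μ : ℝ, ∫ l in Set.Ioi (0:ℝ),
      gauss 1 (y - μ) * (gauss (l ^ 2 * τ ^ 2) μ * ((2 / π) * (1 + l ^ 2)⁻¹)) := by
    unfold marg hs
    congr 1; funext μ
    rw [← integral_const_mul]
  rw [step1, integral_integral_swap hint]
  apply setIntegral_congr_fun measurableSet_Ioi
  intro l hl
  have hspos : 0 < l ^ 2 * τ ^ 2 := by
    have : (0:ℝ) < l := hl
    positivity
  calc ∫ μ : ℝ, gauss 1 (y - μ) * (gauss (l ^ 2 * τ ^ 2) μ * ((2 / π) * (1 + l ^ 2)⁻¹))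
      = ∫ μ : ℝ, ((2 / π) * (1 + l ^ 2)⁻¹) * (gauss 1 (y - μ) * gauss (l ^ 2 * τ ^ 2) μ) := by
        congr 1; funext μ; ring
    _ = ((2 / π) * (1 + l ^ 2)⁻¹) * gauss (1 + l ^ 2 * τ ^ 2) y := by
        rw [integral_const_mul, gauss_conv _ hspos]
    _ = (2 / π) * (1 + l ^ 2)⁻¹ * gauss (1 + l ^ 2 * τ ^ 2) y := by ring


set_option maxHeartbeats 1000000 in
lemma cov (τ : ℝ) (hτ : 0 < τ) (y : ℝ) :
    (∫ l in Set.Ioi (0:ℝ), (2 / π) * (1 + l ^ 2)⁻¹ * gauss (1 + l ^ 2 * τ ^ 2) y)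
      = Real.sqrt 2 / π ^ ((3:ℝ)/2) * τ * Psi y τ := by
  have hπ := Real.pi_pos
  set f : ℝ → ℝ := fun v => Real.sqrt ((1 - v) / (v * τ ^ 2)) with hfdef
  set f' : ℝ → ℝ := fun v =>
    (-(1 / (τ ^ 2 * v ^ 2))) / (2 * Real.sqrt ((1 - v) / (v * τ ^ 2))) with hf'def
  have hderiv : ∀ v ∈ Set.Ioo (0:ℝ) 1,
      HasDerivWithinAt f (f' v) (Set.Ioo (0:ℝ) 1) v := by
    intro v hv
    obtain ⟨hv0, hv1⟩ := hv
    have h1mv : (0:ℝ) < 1 - v := by linarith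
    have hd : HasDerivAt (fun v : ℝ => (1 - v) / (v * τ ^ 2))
        (-(1 / (τ ^ 2 * v ^ 2))) v := by
      have := (HasDerivAt.div
        ((hasDerivAt_const v (1:ℝ)).sub (hasDerivAt_id v))
        ((hasDerivAt_id v).mul_const (τ ^ 2)) (by positivity))
      refine HasDerivAt.congr_deriv this ?_
      simp only [id, Pi.sub_apply]
      field_simp
      ring
    have hne : (1 - v) / (v * τ ^ 2) ≠ 0 := by positivity
    have := (hd.sqrt hne).hasDerivWithinAt (s := Set.Ioo (0:ℝ) 1)
    exact this
  have hinj : Set.InjOn f (Set.Ioo (0:ℝ) 1) := by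
    intro v hv w hw h
    obtain ⟨hv0, hv1⟩ := hv; obtain ⟨hw0, hw1⟩ := hw
    have h1 : (1 - v) / (v * τ ^ 2) = (1 - w) / (w * τ ^ 2) := by
      have hv' : (0:ℝ) ≤ (1 - v) / (v * τ ^ 2) :=
        div_nonneg (by linarith) (by positivity)
      have hw' : (0:ℝ) ≤ (1 - w) / (w * τ ^ 2) :=
        div_nonneg (by linarith) (by positivity)
      rwa [hfdef, Real.sqrt_inj hv' hw'] at h
    have hτ2 : τ ^ 2 ≠ 0 := by positivity
    field_simp at h1
    have h2 : ((1 - v) * w) * τ ^ 2 = ((1 - w) * v) * τ ^ 2 := by ring_nf; ring_nf at h1; linear_combination τ ^ 2 * h1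
    have h3 := mul_right_cancel₀ hτ2 h2
    nlinarith [h3]
  have himg : f '' Set.Ioo (0:ℝ) 1 = Set.Ioi (0:ℝ) := by
    apply Set.eq_of_subset_of_subset
    · rintro x ⟨v, ⟨hv0, hv1⟩, rfl⟩
      have : (0:ℝ) < (1 - v) / (v * τ ^ 2) := by
        have : (0:ℝ) < 1 - v := by linarith
        positivity
      exact Real.sqrt_pos.mpr this
    · intro l hl
      have hl0 : (0:ℝ) < l := hl
      have hd : (0:ℝ) < 1 + l ^ 2 * τ ^ 2 := by positivity
      refine ⟨(1 + l ^ 2 * τ ^ 2)⁻¹, ⟨by positivity, ?_⟩, ?_⟩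
      · have h5 : 1 < 1 + l ^ 2 * τ ^ 2 := by
          nlinarith [mul_pos (pow_pos hl0 2) (pow_pos hτ 2)]
        exact inv_lt_one_iff₀.mpr (Or.inr h5)
      · rw [hfdef]
        have harg : (1 - (1 + l ^ 2 * τ ^ 2)⁻¹) / ((1 + l ^ 2 * τ ^ 2)⁻¹ * τ ^ 2) = l ^ 2 := by
          field_simp
          ring
        simp only [harg]
        exact Real.sqrt_sq hl0.le
  rw [← himg, integral_image_eq_integral_abs_deriv_smul measurableSet_Ioo hderiv hinj]
  have hconst : Real.sqrt 2 / π ^ ((3:ℝ)/2) = 2 / (π * Real.sqrt (2 * π)) := by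
    rw [show ((3:ℝ)/2) = 1 + 1/2 by norm_num, Real.rpow_add hπ, Real.rpow_one,
      ← Real.sqrt_eq_rpow, Real.sqrt_mul (by norm_num : (0:ℝ) ≤ 2)]
    have h2 : Real.sqrt 2 * Real.sqrt 2 = 2 := Real.mul_self_sqrt (by norm_num)
    have hs2 : Real.sqrt 2 ≠ 0 := by positivity
    have hsπ : Real.sqrt π ≠ 0 := by positivity
    field_simp
    linear_combination h2
  rw [hconst]
  unfold Psi
  rw [← integral_const_mul, ← integral_const_mul]
  apply setIntegral_congr_fun measurableSet_Ioo
  intro v hv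
  obtain ⟨hv0, hv1⟩ := hv
  have h1mv : (0:ℝ) < 1 - v := by linarith
  -- replace v by a^2
  obtain ⟨a, ha0, rfl⟩ : ∃ a : ℝ, 0 < a ∧ a ^ 2 = v :=
    ⟨Real.sqrt v, Real.sqrt_pos.mpr hv0, Real.sq_sqrt hv0.le⟩
  have hsa : Real.sqrt (a ^ 2) = a := Real.sqrt_sq ha0.le
  have hD : (0:ℝ) < 1 - (1 - τ ^ 2) * a ^ 2 := by nlinarith
  -- key arg simplifications
  have hargeq : (1 - a ^ 2) / (a ^ 2 * τ ^ 2) = ((Real.sqrt (1 - a ^ 2)) / (a * τ)) ^ 2 := by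
    rw [div_pow, Real.sq_sqrt h1mv.le, mul_pow]
  have hfv : f (a ^ 2) = Real.sqrt (1 - a ^ 2) / (a * τ) := by
    rw [hfdef]; simp only
    rw [hargeq, Real.sqrt_sq (by positivity)]
  have hb0 : (0:ℝ) < Real.sqrt (1 - a ^ 2) := Real.sqrt_pos.mpr h1mv
  set b : ℝ := Real.sqrt (1 - a ^ 2) with hbdef
  have hb2 : b ^ 2 = 1 - a ^ 2 := Real.sq_sqrt h1mv.le
  have h1f2 : 1 + (f (a ^ 2)) ^ 2 = (1 - (1 - τ ^ 2) * a ^ 2) / (a ^ 2 * τ ^ 2) := by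
    rw [hfv, div_pow, hb2, mul_pow]
    field_simp
    ring
  have h1ft : 1 + (f (a ^ 2)) ^ 2 * τ ^ 2 = (a ^ 2)⁻¹ := by
    rw [hfv, div_pow, hb2, mul_pow]
    field_simp
    ring
  have hgauss : gauss ((a ^ 2)⁻¹) y = a / Real.sqrt (2 * π) * Real.exp (-y ^ 2 * a ^ 2 / 2) := by
    unfold gauss
    rw [show 2 * π * (a ^ 2)⁻¹ = (2 * π) / a ^ 2 by ring,
      Real.sqrt_div (by positivity) _, hsa, inv_div,
      show -y ^ 2 / (2 * (a ^ 2)⁻¹) = -y ^ 2 * a ^ 2 / 2 by field_simp]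
  have habs : |f' (a ^ 2)| = (1 / (τ ^ 2 * (a ^ 2) ^ 2)) / (2 * (b / (a * τ))) := by
    rw [hf'def]; simp only
    rw [show Real.sqrt ((1 - a ^ 2) / (a ^ 2 * τ ^ 2)) = b / (a * τ) by
      rw [hargeq, Real.sqrt_sq (by positivity)]]
    rw [abs_div, abs_neg, abs_of_pos (by positivity), abs_of_pos (by positivity)]
  have hrpow : (1 - a ^ 2) ^ (-(1:ℝ) / 2) = b⁻¹ := by
    rw [show (-(1:ℝ) / 2) = -(1/2) by ring, Real.rpow_neg h1mv.le, ← Real.sqrt_eq_rpow, hbdef]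
  simp only [smul_eq_mul]
  rw [habs, h1f2, h1ft, hgauss, hrpow]
  have hsqrt2π : (0:ℝ) < Real.sqrt (2 * π) := Real.sqrt_pos.mpr (by positivity)
  field_simp


lemma marg_formula (τ : ℝ) (hτ : 0 < τ) (y : ℝ) :
    marg y τ = Real.sqrt 2 / Real.pi ^ ((3 : ℝ) / 2) * τ * Psi y τ := by
  rw [marg_eq τ hτ y, cov τ hτ y]

/-- Posterior of the global shrinkage scale (Lemma 2, in integral form). -/
theorem horseshoe_posterior_of_tau :
    (∀ τ : ℝ, 0 < τ → ∀ y : ℝ,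
      marg y τ = Real.sqrt 2 / Real.pi ^ ((3 : ℝ) / 2) * τ * Psi y τ) ∧
    ∀ (n : ℕ) (Y : Fin n → ℝ) (πτ : ℝ → ℝ),
      ∃ C > (0 : ℝ), ∀ τ : ℝ, 0 < τ →
        πτ τ * ∏ i, marg (Y i) τ = C * (πτ τ * τ ^ n * ∏ i, Psi (Y i) τ) := by
  constructor
  · exact fun τ hτ y => marg_formula τ hτ y
  · intro n Y πτ
    have hc : (0:ℝ) < Real.sqrt 2 / Real.pi ^ ((3 : ℝ) / 2) :=
      div_pos (Real.sqrt_pos.mpr (by norm_num)) (Real.rpow_pos_of_pos Real.pi_pos _)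
    refine ⟨(Real.sqrt 2 / Real.pi ^ ((3 : ℝ) / 2)) ^ n, pow_pos hc n, fun τ hτ => ?_⟩
    have hprod : ∏ i, marg (Y i) τ
        = ∏ i, (Real.sqrt 2 / Real.pi ^ ((3 : ℝ) / 2) * τ * Psi (Y i) τ) :=
      Finset.prod_congr rfl fun i _ => marg_formula τ hτ (Y i)
    rw [hprod]
    rw [Finset.prod_mul_distrib, Finset.prod_const, Finset.card_univ, Fintype.card_fin,
      mul_pow]
    ring
end

section
/- Two-sided bound on the univariate Horseshoe density (Lemma A.1): For every fixed τ > 0 and every θ ≠ 0, the Horseshoe prior density satisfies (1/(2√(2π³) τ)) · log(1 + 4τ²/θ²) < π(θ|τ) < (1/(√(2π³) τ)) · log(1 + 2τ²/θ²). -/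
open MeasureTheory
open scoped Classical

open Real Set

section HorseshoeAux

lemma hsAux_laplace {b : ℝ} (hb : 0 < b) : ∫ u in Ioi (0:ℝ), Real.exp (-b * u) = b⁻¹ := by
  have := integral_exp_neg_mul_rpow one_pos hb
  simp only [Real.rpow_one] at this
  rw [this, show (1:ℝ)/1 + 1 = 2 by norm_num, Real.Gamma_two, mul_one,
    show (-1)/(1:ℝ) = -1 by norm_num, Real.rpow_neg_one]

lemma hsAux_key_mono {u : ℝ} (hu : 0 < u) : 1 - u < (1 + u) * Real.exp (-2 * u) := by
  set f : ℝ → ℝ := fun x => (1 + x) * Real.exp (-2 * x) + x with hf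
  have hder : ∀ x : ℝ, HasDerivAt f
      (Real.exp (-(2*x)) + -((1+x) * (Real.exp (-(2*x)) * 2)) + 1) x := by
    intro x
    have h1 : HasDerivAt (fun y : ℝ => -2 * y) (-2) x := by
      simpa using (hasDerivAt_id x).const_mul (-2)
    have h2 := h1.exp
    have h3 : HasDerivAt (fun y : ℝ => 1 + y) 1 x := by
      simpa using (hasDerivAt_id x).const_add 1
    have h4 := (h3.mul h2).add (hasDerivAt_id' x)
    rw [hf]
    refine h4.congr_deriv ?_
    rw [show -(2*x) = -2*x by ring]; ring
  have hmono : StrictMonoOn f (Ici (0:ℝ)) := by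
    apply strictMonoOn_of_deriv_pos (convex_Ici 0)
    · exact (Continuous.continuousOn (by continuity))
    · intro x hx
      rw [interior_Ici] at hx
      rw [(hder x).deriv, show -(2*x) = -2*x from by ring]
      have hx' : (0:ℝ) < x := hx
      have h2x : (2:ℝ) * x ≠ 0 := by positivity
      have := Real.add_one_lt_exp h2x
      have hE : Real.exp (-2*x) * Real.exp (2*x) = 1 := by
        rw [← Real.exp_add]; norm_num
      have hEp := Real.exp_pos (-2*x)
      nlinarith [mul_lt_mul_of_pos_left this hEp]
  have := hmono (self_mem_Ici) (by simpa using hu.le : u ∈ Ici (0:ℝ)) hu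
  simp only [hf] at this
  simp only [mul_zero, neg_zero, Real.exp_zero, mul_one, add_zero] at this
  linarith

lemma hsAux_point_upper {a u : ℝ} (hu : 0 < u) :
    Real.exp (-a * u) / (1 + u) < Real.exp (-a * u) * (1 - Real.exp (-1 * u)) / u := by
  have h1u : (0:ℝ) < 1 + u := by linarith
  rw [div_lt_div_iff₀ h1u hu]
  have hE := Real.exp_pos (-a*u)
  have h := Real.add_one_lt_exp (ne_of_gt hu)
  have hinv : Real.exp (-1*u) * Real.exp u = 1 := by
    rw [← Real.exp_add]; ring_nf; exact Real.exp_zero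
  have h2 : Real.exp (-1*u) * (u + 1) < Real.exp (-1*u) * Real.exp u :=
    mul_lt_mul_of_pos_left h (Real.exp_pos _)
  nlinarith [Real.exp_pos (-1*u)]

lemma hsAux_point_lower {a u : ℝ} (hu : 0 < u) :
    Real.exp (-a * u) * (1 - Real.exp (-2 * u)) / (2 * u) < Real.exp (-a * u) / (1 + u) := by
  have h1u : (0:ℝ) < 1 + u := by linarith
  rw [div_lt_div_iff₀ (by linarith) h1u]
  have hE := Real.exp_pos (-a*u)
  have hk := hsAux_key_mono hu
  nlinarith [Real.exp_pos (-2*u)]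

lemma hsAux_inner_t {a c u : ℝ} (hc : 0 < c) (hu : 0 < u) :
    (∫ t in Ioc (0:ℝ) c, Real.exp (-(a+t)*u)) =
      Real.exp (-a*u) * (1 - Real.exp (-c*u)) / u := by
  rw [← intervalIntegral.integral_of_le hc.le]
  have hu' : -u ≠ 0 := neg_ne_zero.mpr (ne_of_gt hu)
  have hfd : ∀ t ∈ Set.uIcc (0:ℝ) c,
      HasDerivAt (fun t => Real.exp (-(a+t)*u) / (-u)) (Real.exp (-(a+t)*u)) t := by
    intro t _
    have h1 : HasDerivAt (fun t : ℝ => -(a+t)*u) (-u) t := by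
      simpa using (((hasDerivAt_id t).const_add a).neg).mul_const u
    have h2 := (h1.exp).div_const (-u)
    exact h2.congr_deriv (mul_div_cancel_right₀ _ hu')
  rw [intervalIntegral.integral_eq_sub_of_hasDerivAt hfd
    (Continuous.intervalIntegrable (by continuity) _ _)]
  have he : Real.exp (-(a+c)*u) = Real.exp (-a*u) * Real.exp (-c*u) := by
    rw [← Real.exp_add]; congr 1; ring
  rw [show -(a+0)*u = -a*u from by ring, he]
  field_simp
  ring

lemma hsAux_t_int {a c : ℝ} (ha : 0 < a) (hc : 0 < c) :
    (∫ t in Ioc (0:ℝ) c, (a+t)⁻¹) = Real.log ((a+c)/a) := by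
  rw [← intervalIntegral.integral_of_le hc.le]
  have hfd : ∀ t ∈ Set.uIcc (0:ℝ) c,
      HasDerivAt (fun t => Real.log (a+t)) ((a+t)⁻¹) t := by
    intro t ht
    rw [Set.uIcc_of_le hc.le] at ht
    have hat : 0 < a + t := by have := ht.1; linarith
    have h1 : HasDerivAt (fun t : ℝ => a + t) 1 t := by
      simpa using (hasDerivAt_id t).const_add a
    have := (Real.hasDerivAt_log (ne_of_gt hat)).comp t h1
    rw [mul_one] at this
    exact this
  have hcont : ContinuousOn (fun t : ℝ => (a+t)⁻¹) (Set.uIcc 0 c) := by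
    apply ContinuousOn.inv₀ (by fun_prop)
    intro t ht
    rw [Set.uIcc_of_le hc.le] at ht
    have := ht.1; positivity
  rw [intervalIntegral.integral_eq_sub_of_hasDerivAt hfd (hcont.intervalIntegrable)]
  rw [add_zero, Real.log_div (by positivity) (ne_of_gt ha)]

lemma hsAux_fubini_int {a c : ℝ} (ha : 0 < a) (hc : 0 < c) :
    Integrable (Function.uncurry fun u t => Real.exp (-(a+t)*u))
      ((volume.restrict (Ioi (0:ℝ))).prod (volume.restrict (Ioc (0:ℝ) c))) := by
  have hcont : Continuous (Function.uncurry fun u t : ℝ => Real.exp (-(a+t)*u)) := by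
    apply Real.continuous_exp.comp; fun_prop
  rw [integrable_prod_iff hcont.aestronglyMeasurable]
  constructor
  · exact Filter.Eventually.of_forall fun u => Continuous.integrableOn_Ioc (by fun_prop)
  · apply Integrable.mono' ((exp_neg_integrableOn_Ioi 0 ha).mul_const c)
    · exact (hcont.norm.stronglyMeasurable.integral_prod_right').aestronglyMeasurable
    · filter_upwards [ae_restrict_mem measurableSet_Ioi] with u hu
      have hb : ∀ t ∈ Ioc (0:ℝ) c, ‖‖Real.exp (-(a+t)*u)‖‖ ≤ Real.exp (-a*u) := by
        intro t ht
        simp only [Real.norm_eq_abs, Real.abs_exp, abs_abs]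
        rw [Real.exp_le_exp]
        nlinarith [ht.1, hu.out]
      have := norm_setIntegral_le_of_norm_le_const (μ := volume) (C := Real.exp (-a*u))
        (measure_Ioc_lt_top) hb
      rw [Real.volume_real_Ioc_of_le hc.le, sub_zero] at this
      simpa using this

lemma hsAux_frullani {a c : ℝ} (ha : 0 < a) (hc : 0 < c) :
    (∫ u in Ioi (0:ℝ), Real.exp (-a*u) * (1 - Real.exp (-c*u)) / u) =
      Real.log ((a+c)/a) := by
  have h1 : (∫ u in Ioi (0:ℝ), Real.exp (-a*u) * (1 - Real.exp (-c*u)) / u) =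
      ∫ u in Ioi (0:ℝ), ∫ t in Ioc (0:ℝ) c, Real.exp (-(a+t)*u) := by
    refine setIntegral_congr_fun measurableSet_Ioi fun u hu => ?_
    rw [hsAux_inner_t hc hu]
  rw [h1, integral_integral_swap (hsAux_fubini_int ha hc)]
  rw [← hsAux_t_int ha hc]
  refine setIntegral_congr_fun measurableSet_Ioc fun t ht => ?_
  exact hsAux_laplace (by linarith [ht.1] : (0:ℝ) < a + t)

lemma hsAux_int_E {a : ℝ} (ha : 0 < a) :
    IntegrableOn (fun u => Real.exp (-a*u) / (1+u)) (Ioi (0:ℝ)) := by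
  apply Integrable.mono' (exp_neg_integrableOn_Ioi 0 ha)
  · apply ContinuousOn.aestronglyMeasurable ?_ measurableSet_Ioi
    apply ContinuousOn.div (by fun_prop) (by fun_prop)
    intro u hu; have : (0:ℝ) < u := hu; positivity
  · filter_upwards [ae_restrict_mem measurableSet_Ioi] with u hu
    have hu' : (0:ℝ) < u := hu
    rw [Real.norm_eq_abs, abs_of_nonneg (by positivity)]
    rw [div_le_iff₀ (by linarith)]
    nlinarith [Real.exp_pos (-a*u)]

lemma hsAux_int_F {a c : ℝ} (ha : 0 < a) (hc : 0 < c) :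
    IntegrableOn (fun u => Real.exp (-a*u) * (1 - Real.exp (-c*u)) / u) (Ioi (0:ℝ)) := by
  apply Integrable.mono' ((exp_neg_integrableOn_Ioi 0 ha).mul_const c)
  · apply ContinuousOn.aestronglyMeasurable ?_ measurableSet_Ioi
    apply ContinuousOn.div (by fun_prop) (by fun_prop)
    intro u hu; exact ne_of_gt hu
  · filter_upwards [ae_restrict_mem measurableSet_Ioi] with u hu
    have hu' : (0:ℝ) < u := hu
    have h1 : Real.exp (-c*u) ≤ 1 := Real.exp_le_one_iff.mpr (by nlinarith)
    have h2 : 1 - c*u ≤ Real.exp (-c*u) := by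
      have := Real.add_one_le_exp (-c*u); linarith
    rw [Real.norm_eq_abs,
      abs_of_nonneg (div_nonneg (by nlinarith [Real.exp_pos (-a*u)]) hu'.le)]
    rw [div_le_iff₀ hu']
    nlinarith [Real.exp_pos (-a*u)]

lemma hsAux_setInt_lt {f g : ℝ → ℝ} (hf : IntegrableOn f (Ioi (0:ℝ)))
    (hg : IntegrableOn g (Ioi (0:ℝ))) (h : ∀ u ∈ Ioi (0:ℝ), f u < g u) :
    (∫ u in Ioi (0:ℝ), f u) < ∫ u in Ioi (0:ℝ), g u := by
  have h0 : 0 < ∫ u in Ioi (0:ℝ), (g u - f u) := by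
    rw [setIntegral_pos_iff_support_of_nonneg_ae (f := fun u => g u - f u) ?_ (hg.sub hf)]
    · refine lt_of_lt_of_le ?_ (measure_mono (fun u hu =>
        ⟨by simp only [Function.mem_support]; exact sub_ne_zero.mpr (h u hu).ne', hu⟩ :
        Ioi (0:ℝ) ⊆ Function.support (fun u => g u - f u) ∩ Ioi 0))
      rw [Real.volume_Ioi]; exact ENNReal.zero_lt_top
    · filter_upwards [ae_restrict_mem measurableSet_Ioi] with u hu
      simp only [Pi.zero_apply]
      linarith [h u hu]
  have := integral_sub hg hf
  rw [this] at h0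
  linarith

lemma hsAux_hs_eq (τ θ : ℝ) (hτ : 0 < τ) (hθ : θ ≠ 0) :
    hs τ θ = (Real.sqrt (2*Real.pi^3) * τ)⁻¹ *
      ∫ u in Ioi (0:ℝ), Real.exp (-(θ^2/(2*τ^2))*u) / (1+u) := by
  have hθ2 : 0 < θ^2 := by positivity
  set a := θ^2/(2*τ^2) with ha_def
  have ha : 0 < a := by positivity
  set g : ℝ → ℝ := fun u => Real.exp (-a*u) / (1+u) with hg
  have himg : (fun l : ℝ => (l^2)⁻¹) '' Ioi 0 = Ioi 0 := by
    ext u; simp only [mem_image, mem_Ioi]; constructor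
    · rintro ⟨l, hl, rfl⟩; positivity
    · intro hu
      exact ⟨(Real.sqrt u)⁻¹, by positivity, by
        rw [inv_pow, inv_inv, Real.sq_sqrt hu.le]⟩
  have hderiv : ∀ x ∈ Ioi (0:ℝ), HasDerivWithinAt (fun l : ℝ => (l^2)⁻¹)
      (-((2:ℕ)*x^(2-1)) / (x^2)^2) (Ioi 0) x := by
    intro x hx
    have hx' : (0:ℝ) < x := hx
    exact ((hasDerivAt_pow 2 x).inv (by positivity)).hasDerivWithinAt
  have hinj : InjOn (fun l : ℝ => (l^2)⁻¹) (Ioi 0) := by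
    intro x hx y hy hxy
    have hx' : (0:ℝ) < x := hx
    have hy' : (0:ℝ) < y := hy
    have h2 : x^2 = y^2 := by
      have := congrArg (·⁻¹) hxy
      simpa using this
    rw [← Real.sqrt_sq hx'.le, ← Real.sqrt_sq hy'.le, h2]
  have key := integral_image_eq_integral_abs_deriv_smul measurableSet_Ioi hderiv hinj g
  rw [himg] at key
  have hsqrt : Real.sqrt (2*Real.pi^3) = Real.pi * Real.sqrt (2*Real.pi) := by
    rw [show 2*Real.pi^3 = Real.pi^2 * (2*Real.pi) by ring,
      Real.sqrt_mul (by positivity), Real.sqrt_sq Real.pi_pos.le]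
  rw [hs, show (∫ u in Ioi (0:ℝ), Real.exp (-(θ^2/(2*τ^2))*u) / (1+u)) =
      ∫ u in Ioi (0:ℝ), g u from rfl, key, ← integral_const_mul]
  refine setIntegral_congr_fun measurableSet_Ioi fun l hl => ?_
  have hl' : (0:ℝ) < l := hl
  have hπ := Real.pi_pos
  have hsq2 : Real.sqrt (2*Real.pi*(l^2*τ^2)) = Real.sqrt (2*Real.pi) * (l*τ) := by
    rw [show 2*Real.pi*(l^2*τ^2) = (2*Real.pi)*(l*τ)^2 by ring,
      Real.sqrt_mul (by positivity), Real.sqrt_sq (by positivity)]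
  have hexp : -θ^2/(2*(l^2*τ^2)) = -a*(l^2)⁻¹ := by
    rw [ha_def]; field_simp
  have hsqpos : 0 < Real.sqrt (2*Real.pi) := Real.sqrt_pos.mpr (by positivity)
  simp only [gauss, hg, smul_eq_mul]
  rw [hsq2, hexp, hsqrt]
  rw [abs_div, abs_neg, abs_of_nonneg (by positivity : (0:ℝ) ≤ (2:ℕ)*l^(2-1)),
    abs_of_nonneg (by positivity : (0:ℝ) ≤ (l^2)^2)]
  field_simp
  ring

end HorseshoeAux

/-- Two-sided bound on the univariate Horseshoe density (Lemma A.1). -/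
theorem horseshoe_density_two_sided_bound (τ : ℝ) (hτ : 0 < τ) (θ : ℝ) (hθ : θ ≠ 0) :
    (2 * Real.sqrt (2 * Real.pi ^ 3) * τ)⁻¹ * Real.log (1 + 4 * τ ^ 2 / θ ^ 2) < hs τ θ ∧
      hs τ θ < (Real.sqrt (2 * Real.pi ^ 3) * τ)⁻¹ * Real.log (1 + 2 * τ ^ 2 / θ ^ 2) := by
  have hθ2 : 0 < θ^2 := by positivity
  have hπ := Real.pi_pos
  have hsq : 0 < Real.sqrt (2*Real.pi^3) := Real.sqrt_pos.mpr (by positivity)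
  set a := θ^2/(2*τ^2) with ha_def
  have ha : 0 < a := by positivity
  have hEq := hsAux_hs_eq τ θ hτ hθ
  rw [← ha_def] at hEq
  have hC : 0 < (Real.sqrt (2*Real.pi^3) * τ)⁻¹ := by positivity
  constructor
  · -- lower bound
    have heqf : (fun u : ℝ => Real.exp (-a*u) * (1 - Real.exp (-2*u)) / (2*u)) =
        fun u : ℝ => (Real.exp (-a*u) * (1 - Real.exp (-2*u)) / u) / 2 := by
      funext u
      rw [div_div, mul_comm (2:ℝ) u]
    have hintf : IntegrableOn
        (fun u : ℝ => Real.exp (-a*u) * (1 - Real.exp (-2*u)) / (2*u)) (Ioi (0:ℝ)) := by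
      rw [heqf]
      exact (hsAux_int_F ha two_pos).div_const 2
    have hlt := hsAux_setInt_lt hintf (hsAux_int_E ha)
      (fun u hu => hsAux_point_lower hu.out)
    have hval : (∫ u in Ioi (0:ℝ), Real.exp (-a*u) * (1 - Real.exp (-2*u)) / (2*u)) =
        Real.log ((a+2)/a) / 2 := by
      rw [heqf, integral_div, hsAux_frullani ha two_pos]
    have harg : (a+2)/a = 1 + 4*τ^2/θ^2 := by
      rw [ha_def]; field_simp; ring
    calc (2 * Real.sqrt (2*Real.pi^3) * τ)⁻¹ * Real.log (1 + 4*τ^2/θ^2)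
        = (Real.sqrt (2*Real.pi^3) * τ)⁻¹ * (Real.log ((a+2)/a) / 2) := by
          rw [harg, mul_assoc, mul_inv]; ring
      _ = (Real.sqrt (2*Real.pi^3) * τ)⁻¹ *
          ∫ u in Ioi (0:ℝ), Real.exp (-a*u) * (1 - Real.exp (-2*u)) / (2*u) := by rw [hval]
      _ < (Real.sqrt (2*Real.pi^3) * τ)⁻¹ *
          ∫ u in Ioi (0:ℝ), Real.exp (-a*u) / (1+u) := by
          exact mul_lt_mul_of_pos_left hlt hC
      _ = hs τ θ := hEq.symm
  · -- upper bound
    have hlt := hsAux_setInt_lt (hsAux_int_E ha) (hsAux_int_F ha one_pos)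
      (fun u hu => hsAux_point_upper hu.out)
    have harg : (a+1)/a = 1 + 2*τ^2/θ^2 := by
      rw [ha_def]; field_simp
    calc hs τ θ = (Real.sqrt (2*Real.pi^3) * τ)⁻¹ *
          ∫ u in Ioi (0:ℝ), Real.exp (-a*u) / (1+u) := hEq
      _ < (Real.sqrt (2*Real.pi^3) * τ)⁻¹ *
          ∫ u in Ioi (0:ℝ), Real.exp (-a*u) * (1 - Real.exp (-1*u)) / u :=
          mul_lt_mul_of_pos_left hlt hC
      _ = (Real.sqrt (2*Real.pi^3) * τ)⁻¹ * Real.log (1 + 2*τ^2/θ^2) := by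
          rw [hsAux_frullani ha one_pos, harg]
end

section
/- Exponential-integral representation of the Horseshoe density: For every τ > 0 and every θ ≠ 0, the Horseshoe prior density satisfies π(θ|τ) = (1/(√(2π³) τ)) · e^{θ²/(2τ²)} · E₁(θ²/(2τ²)), where E₁(z) = ∫_z^∞ e^{−t}/t dt is the exponential integral. -/
open MeasureTheory
open scoped Classical

/-- The exponential integral `E₁(z) = ∫_z^∞ e^{−t}/t dt`. -/
noncomputable def expInt (z : ℝ) : ℝ :=
  ∫ t in Set.Ioi z, Real.exp (-t) / t

/-- Exponential-integral representation of the Horseshoe density. -/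
theorem horseshoe_density_expInt_representation (τ : ℝ) (hτ : 0 < τ) (θ : ℝ) (hθ : θ ≠ 0) :
    hs τ θ = (Real.sqrt (2 * Real.pi ^ 3) * τ)⁻¹ * Real.exp (θ ^ 2 / (2 * τ ^ 2)) *
      expInt (θ ^ 2 / (2 * τ ^ 2)) := by
  have hπ := Real.pi_pos
  set z := θ ^ 2 / (2 * τ ^ 2) with hzdef
  have hz : 0 < z := by positivity
  have hsq : (0:ℝ) < Real.sqrt (2 * Real.pi) := Real.sqrt_pos.mpr (by positivity)
  -- Step A : substitution u = l^(-2)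
  have hrpow := integral_comp_rpow_Ioi (fun y : ℝ => Real.exp (-(z * y)) / (1 + y))
      (p := -2) (by norm_num)
  have stepA : hs τ θ = (Real.pi * Real.sqrt (2 * Real.pi) * τ)⁻¹ *
      ∫ y in Set.Ioi (0:ℝ), Real.exp (-(z * y)) / (1 + y) := by
    rw [← hrpow, hs, ← integral_const_mul]
    refine setIntegral_congr_fun measurableSet_Ioi (fun x hx => ?_)
    have hx0 : (0:ℝ) < x := hx
    have hxm2 : x ^ (-2:ℝ) = (x ^ 2)⁻¹ := by
      rw [show (-2:ℝ) = -((2:ℕ):ℝ) by norm_num, Real.rpow_neg hx0.le, Real.rpow_natCast]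
    have hxm3 : x ^ ((-2:ℝ) - 1) = (x ^ 3)⁻¹ := by
      rw [show (-2:ℝ) - 1 = -((3:ℕ):ℝ) by norm_num, Real.rpow_neg hx0.le, Real.rpow_natCast]
    simp only [gauss, hxm2, hxm3]
    have hsqrt : Real.sqrt (2 * Real.pi * (x ^ 2 * τ ^ 2)) = Real.sqrt (2 * Real.pi) * x * τ := by
      rw [Real.sqrt_mul (by positivity), show x ^ 2 * τ ^ 2 = (x * τ) ^ 2 by ring,
        Real.sqrt_sq (by positivity), mul_assoc]
    have hexp : -θ ^ 2 / (2 * (x ^ 2 * τ ^ 2)) = -(z * (x ^ 2)⁻¹) := by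
      rw [hzdef]; field_simp
    rw [hsqrt, hexp]
    have h1 : (0:ℝ) < 1 + x ^ 2 := by positivity
    have h2 : (0:ℝ) < 1 + (x ^ 2)⁻¹ := by positivity
    simp only [smul_eq_mul, abs_neg, abs_two]
    field_simp [hx0.ne']
    ring
  -- Step B : shift t = y + 1
  have stepB : (∫ y in Set.Ioi (0:ℝ), Real.exp (-(z * y)) / (1 + y)) =
      Real.exp z * ∫ t in Set.Ioi (1:ℝ), Real.exp (-(z * t)) / t := by
    have hemb : MeasurableEmbedding (fun y : ℝ => y + 1) :=
      (measurableEmbedding_addRight 1)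
    have hmp : MeasurePreserving (fun y : ℝ => y + 1) volume volume :=
      measurePreserving_add_right volume 1
    have hpre : (fun y : ℝ => y + 1) ⁻¹' Set.Ioi 1 = Set.Ioi 0 := by
      ext y; simp [Set.mem_preimage, Set.mem_Ioi]
    have := hmp.setIntegral_preimage_emb hemb
      (fun t => Real.exp (-(z * t) + z) / t) (Set.Ioi 1)
    rw [hpre] at this
    have hL : (∫ y in Set.Ioi (0:ℝ), Real.exp (-(z * (y + 1)) + z) / (y + 1)) =
        ∫ y in Set.Ioi (0:ℝ), Real.exp (-(z * y)) / (1 + y) := by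
      refine setIntegral_congr_fun measurableSet_Ioi (fun y _ => ?_)
      rw [show -(z * (y + 1)) + z = -(z * y) by ring, add_comm y 1]
    rw [← hL, this, ← integral_const_mul]
    refine setIntegral_congr_fun measurableSet_Ioi (fun t _ => ?_)
    rw [Real.exp_add, mul_comm (Real.exp (-(z*t))) (Real.exp z), mul_div_assoc]
  -- Step C : scaling s = z * t
  have stepC : (∫ t in Set.Ioi (1:ℝ), Real.exp (-(z * t)) / t) = expInt z := by
    have hmul := integral_comp_mul_left_Ioi (fun s : ℝ => z * (Real.exp (-s) / s)) 1 hz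
    simp only [mul_one] at hmul
    have hL : (∫ t in Set.Ioi (1:ℝ), z * (Real.exp (-(z * t)) / (z * t))) =
        ∫ t in Set.Ioi (1:ℝ), Real.exp (-(z * t)) / t := by
      refine setIntegral_congr_fun measurableSet_Ioi (fun t ht => ?_)
      have ht0 : (0:ℝ) < t := lt_trans one_pos ht
      field_simp
    rw [← hL, hmul, integral_const_mul, smul_eq_mul, expInt]
    field_simp
  rw [stepA, stepB, stepC]
  have hsq3 : Real.sqrt (2 * Real.pi ^ 3) = Real.pi * Real.sqrt (2 * Real.pi) := by
    rw [show 2 * Real.pi ^ 3 = Real.pi ^ 2 * (2 * Real.pi) by ring,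
      Real.sqrt_mul (by positivity), Real.sqrt_sq hπ.le]
  rw [hsq3]; ring
end

section
/- Sign of the truncated Gaussian cross term: Let Z ∼ N(0,1) with density φ. For every θ ∈ ℝ and every ζ > 0, E[ θZ · 1{|Z+θ| > ζ} ] = θ·( φ(ζ−θ) − φ(ζ+θ) ) ≥ 0, and the inequality is strict whenever θ ≠ 0. -/
set_option maxHeartbeats 1000000


open MeasureTheory
open scoped Classical

open Set Filter Real in
lemma gauss_one (x : ℝ) :
    gauss 1 x = (Real.sqrt (2 * Real.pi))⁻¹ * Real.exp (-x ^ 2 / 2) := by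
  simp [gauss]

lemma gauss_pos (x : ℝ) : 0 < gauss 1 x := by
  rw [gauss_one]
  have h2π : (0:ℝ) < 2 * Real.pi := by positivity
  positivity

open Set Filter Real in
lemma integrable_id_mul_gauss : MeasureTheory.Integrable (fun z : ℝ => z * gauss 1 z) := by
  have h := (integrable_mul_exp_neg_mul_sq (b := (1/2 : ℝ)) (by norm_num)).const_mul
      ((Real.sqrt (2 * Real.pi))⁻¹)
  refine h.congr ?_
  · filter_upwards with x
    rw [gauss_one]
    ring_nf

open Set Filter Real in
lemma hasDerivAt_F (x : ℝ) :
    HasDerivAt (fun x : ℝ => -((Real.sqrt (2 * Real.pi))⁻¹ * Real.exp (-x ^ 2 / 2)))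
      (x * gauss 1 x) x := by
  have h1 : HasDerivAt (fun x : ℝ => -x ^ 2 / 2) (-x) x := by
    have := ((hasDerivAt_pow 2 x).neg).div_const 2
    refine this.congr_deriv ?_
    ring
  have h2 := (h1.exp.const_mul ((Real.sqrt (2 * Real.pi))⁻¹)).neg
  refine h2.congr_deriv ?_
  rw [gauss_one]; ring

open Set Filter Real in
lemma tendsto_neg_sq_div_two_atBot :
    Tendsto (fun x : ℝ => -x ^ 2 / 2) atTop atBot := by
  have h : Tendsto (fun x : ℝ => x ^ 2) atTop atTop :=
    tendsto_pow_atTop (by norm_num)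
  have h2 := (tendsto_neg_atTop_atBot.comp h).atBot_div_const (by norm_num : (0:ℝ) < 2)
  exact h2.congr fun x => by simp [Function.comp]

open Set Filter Real in
lemma tendsto_F_atTop :
    Tendsto (fun x : ℝ => -((Real.sqrt (2 * Real.pi))⁻¹ * Real.exp (-x ^ 2 / 2))) atTop (nhds 0) := by
  have h : Tendsto (fun x : ℝ => Real.exp (-x ^ 2 / 2)) atTop (nhds 0) :=
    Real.tendsto_exp_atBot.comp tendsto_neg_sq_div_two_atBot
  have hk : Continuous fun y : ℝ => -((Real.sqrt (2 * Real.pi))⁻¹ * y) := by continuity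
  have h2 := (hk.tendsto 0).comp h
  simpa [Function.comp_def] using h2

open Set Filter Real in
lemma tendsto_F_atBot :
    Tendsto (fun x : ℝ => -((Real.sqrt (2 * Real.pi))⁻¹ * Real.exp (-x ^ 2 / 2))) atBot (nhds 0) := by
  have hsq : Tendsto (fun x : ℝ => -x ^ 2 / 2) atBot atBot := by
    have h1 : Tendsto (fun x : ℝ => x ^ 2) atBot atTop := by
      have h0 : Tendsto (fun x : ℝ => x ^ 2) atTop atTop := tendsto_pow_atTop (by norm_num)
      have := h0.comp (tendsto_neg_atBot_atTop (G := ℝ))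
      exact this.congr fun x => by simp [Function.comp]
    have h2 := (tendsto_neg_atTop_atBot.comp h1).atBot_div_const (by norm_num : (0:ℝ) < 2)
    exact h2.congr fun x => by simp [Function.comp]
  have h : Tendsto (fun x : ℝ => Real.exp (-x ^ 2 / 2)) atBot (nhds 0) :=
    Real.tendsto_exp_atBot.comp hsq
  have hk : Continuous fun y : ℝ => -((Real.sqrt (2 * Real.pi))⁻¹ * y) := by continuity
  have h2 := (hk.tendsto 0).comp h
  simpa [Function.comp_def] using h2

open Set Filter Real in
lemma integral_Ioi_id_mul_gauss (a : ℝ) :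
    ∫ z in Ioi a, z * gauss 1 z = gauss 1 a := by
  have h := integral_Ioi_of_hasDerivAt_of_tendsto' (a := a) (m := 0)
      (f := fun x : ℝ => -((Real.sqrt (2 * Real.pi))⁻¹ * Real.exp (-x ^ 2 / 2)))
      (f' := fun z => z * gauss 1 z)
      (fun x _ => hasDerivAt_F x) integrable_id_mul_gauss.integrableOn tendsto_F_atTop
  rw [h, gauss_one]; ring

open Set Filter Real in
lemma integral_Iio_id_mul_gauss (a : ℝ) :
    ∫ z in Iio a, z * gauss 1 z = -gauss 1 a := by
  rw [← integral_Iic_eq_integral_Iio]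
  have h := integral_Iic_of_hasDerivAt_of_tendsto' (a := a) (m := 0)
      (f := fun x : ℝ => -((Real.sqrt (2 * Real.pi))⁻¹ * Real.exp (-x ^ 2 / 2)))
      (f' := fun z => z * gauss 1 z)
      (fun x _ => hasDerivAt_F x) integrable_id_mul_gauss.integrableOn tendsto_F_atBot
  rw [h, gauss_one]; ring

/-- Sign of the truncated Gaussian cross term. -/
theorem truncated_gaussian_cross_term_sign (θ ζ : ℝ) (hζ : 0 < ζ) :
    (∫ z in {z : ℝ | ζ < |z + θ|}, θ * z * gauss 1 z) =
      θ * (gauss 1 (ζ - θ) - gauss 1 (ζ + θ)) ∧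
    0 ≤ θ * (gauss 1 (ζ - θ) - gauss 1 (ζ + θ)) ∧
    (θ ≠ 0 → 0 < θ * (gauss 1 (ζ - θ) - gauss 1 (ζ + θ))) := by
  have hset : {z : ℝ | ζ < |z + θ|} = Set.Iio (-ζ - θ) ∪ Set.Ioi (ζ - θ) := by
    ext z
    simp only [Set.mem_setOf_eq, Set.mem_union, Set.mem_Iio, Set.mem_Ioi, lt_abs]
    constructor
    · rintro (h | h)
      · right; linarith
      · left; linarith
    · rintro (h | h)
      · right; linarith
      · left; linarith
  have hdisj : Disjoint (Set.Iio (-ζ - θ)) (Set.Ioi (ζ - θ)) :=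
    (Set.Iio_disjoint_Ici (le_refl _)).mono_right
      (Set.Ioi_subset_Ici (by linarith))
  have heq : (∫ z in {z : ℝ | ζ < |z + θ|}, θ * z * gauss 1 z) =
      θ * (gauss 1 (ζ - θ) - gauss 1 (ζ + θ)) := by
    have : ∀ s : Set ℝ, (∫ z in s, θ * z * gauss 1 z) = θ * ∫ z in s, z * gauss 1 z := by
      intro s
      rw [← integral_const_mul]
      congr 1; ext z; ring
    rw [hset, this, setIntegral_union hdisj measurableSet_Ioi
        integrable_id_mul_gauss.integrableOn integrable_id_mul_gauss.integrableOn,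
      integral_Iio_id_mul_gauss, integral_Ioi_id_mul_gauss]
    have hg : gauss 1 (-ζ - θ) = gauss 1 (ζ + θ) := by
      rw [gauss_one, gauss_one]; ring_nf
    rw [hg]; ring
  have hpos : θ ≠ 0 → 0 < θ * (gauss 1 (ζ - θ) - gauss 1 (ζ + θ)) := by
    intro hθ
    have hc : (0:ℝ) < (Real.sqrt (2 * Real.pi))⁻¹ := by
      have : (0:ℝ) < 2 * Real.pi := by positivity
      positivity
    have key : 0 < θ * (Real.exp (-(ζ - θ) ^ 2 / 2) - Real.exp (-(ζ + θ) ^ 2 / 2)) := by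
      rcases lt_or_gt_of_ne hθ with h | h
      · have hlt : -(ζ - θ) ^ 2 / 2 < -(ζ + θ) ^ 2 / 2 := by nlinarith
        have := Real.exp_lt_exp.mpr hlt
        nlinarith
      · have hlt : -(ζ + θ) ^ 2 / 2 < -(ζ - θ) ^ 2 / 2 := by nlinarith
        have := Real.exp_lt_exp.mpr hlt
        nlinarith
    have : θ * (gauss 1 (ζ - θ) - gauss 1 (ζ + θ)) =
        (Real.sqrt (2 * Real.pi))⁻¹ *
          (θ * (Real.exp (-(ζ - θ) ^ 2 / 2) - Real.exp (-(ζ + θ) ^ 2 / 2))) := by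
      rw [gauss_one, gauss_one]; ring
    rw [this]
    positivity
  refine ⟨heq, ?_, hpos⟩
  rcases eq_or_ne θ 0 with rfl | hθ
  · simp
  · exact (hpos hθ).le
end
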